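/- Let H : X → (0,∞) be Hölder continuous, β ∈ ℝ, and ℒ_β(f)(x) = ∑_{T(z)=x} H(z)^{-β} f(z). Let λ_β be the spectral radius (leading eigenvalue) and ν_β the probability with ℒ_β^*(ν_β) = λ_β ν_β. Set Λ_n(x) = H^{-β[n]}(x) λ^{[n]}(x) where H^{β[n]}(x) = ∏_{i=0}^{n-1} H(T^i x)^β and λ^{[n]}(x) = (p(x) p(Tx) ⋯ p(T^{n-1}x))^{-1}. Then for every continuous f and every n, ∫ f dν_β = ∫ Λ_n^{-1} · E_μ(Λ_n f | F_n) dν_β. -/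

import Mathlib

open MeasureTheory Finset

/-- The full shift space `{1,…,k}^ℕ`, modeled as `ℕ → Fin k`. -/
abbrev ShiftSpace (k : ℕ) := ℕ → Fin k

/-- The left shift `T`. -/
def shiftT {k : ℕ} (x : ShiftSpace k) : ShiftSpace k := fun n => x (n + 1)

/-- Prepending a symbol: the `k` preimages of `x` under the shift are `consS i x`. -/
def consS {k : ℕ} (i : Fin k) (x : ShiftSpace k) : ShiftSpace k :=
  fun n => Nat.casesOn n i x

/-- The Ruelle operator `ℒ_p f (x) = ∑_{T z = x} p z · f z` on complex functions. -/
noncomputable def ruelleOp {k : ℕ} (p : ShiftSpace k → ℝ) (f : ShiftSpace k → ℂ) :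
    ShiftSpace k → ℂ :=
  fun x => ∑ i : Fin k, (p (consS i x) : ℂ) * f (consS i x)

/-- The Ruelle operator on real functions. -/
noncomputable def ruelleOpR {k : ℕ} (p : ShiftSpace k → ℝ) (f : ShiftSpace k → ℝ) :
    ShiftSpace k → ℝ :=
  fun x => ∑ i : Fin k, p (consS i x) * f (consS i x)

/-- Hölder continuity with respect to the standard ultrametric on the shift space:
`|f x - f y| ≤ C · 2^{-α n}` whenever `x` and `y` agree on the first `n` coordinates. -/
def HolderSeq {k : ℕ} (f : ShiftSpace k → ℝ) : Prop :=
  ∃ C α : ℝ, 0 < α ∧ ∀ x y : ShiftSpace k, ∀ n : ℕ,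
    (∀ m < n, x m = y m) → |f x - f y| ≤ C * (2 : ℝ) ^ (-(α * n))

/-- `λ^{-[n]}(x) = ∏_{i<n} p(T^i x)`. -/
noncomputable def lamInv {k : ℕ} (p : ShiftSpace k → ℝ) (n : ℕ) (x : ShiftSpace k) : ℝ :=
  ∏ i ∈ Finset.range n, p (shiftT^[i] x)

/-- `H^{β[n]}(x) = ∏_{i<n} H(T^i x)^β`. -/
noncomputable def hPow {k : ℕ} (H : ShiftSpace k → ℝ) (β : ℝ) (n : ℕ)
    (x : ShiftSpace k) : ℝ :=
  ∏ i ∈ Finset.range n, H (shiftT^[i] x) ^ β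

/-- `Λ_n = H^{-β[n]} · λ^{[n]}`. -/
noncomputable def lambdaN {k : ℕ} (p H : ShiftSpace k → ℝ) (β : ℝ) (n : ℕ)
    (x : ShiftSpace k) : ℝ :=
  hPow H (-β) n x * (lamInv p n x)⁻¹

/-- The Ruelle operator `ℒ_{-β log H}` on real functions. -/
noncomputable def ruelleH {k : ℕ} (H : ShiftSpace k → ℝ) (β : ℝ) (f : ShiftSpace k → ℝ) :
    ShiftSpace k → ℝ :=
  fun x => ∑ i : Fin k, H (consS i x) ^ (-β) * f (consS i x)

-- aux lemmas
lemma shiftT_consS {k : ℕ} (i : Fin k) (x : ShiftSpace k) : shiftT (consS i x) = x := rfl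

lemma continuous_consS {k : ℕ} (i : Fin k) : Continuous (consS i : ShiftSpace k → ShiftSpace k) := by
  apply continuous_pi
  intro n
  cases n with
  | zero => exact continuous_const
  | succ m => exact continuous_apply m

lemma continuous_shiftT {k : ℕ} : Continuous (shiftT : ShiftSpace k → ShiftSpace k) :=
  continuous_pi fun n => continuous_apply (n + 1)

lemma hPow_succ_cons {k : ℕ} (H : ShiftSpace k → ℝ) (β : ℝ) (n : ℕ) (i : Fin k)
    (x : ShiftSpace k) :
    hPow H β (n + 1) (consS i x) = H (consS i x) ^ β * hPow H β n x := by
  unfold hPow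
  rw [Finset.prod_range_succ']
  simp [Function.iterate_succ_apply, shiftT_consS, mul_comm]

lemma lamInv_succ_cons {k : ℕ} (p : ShiftSpace k → ℝ) (n : ℕ) (i : Fin k)
    (x : ShiftSpace k) :
    lamInv p (n + 1) (consS i x) = p (consS i x) * lamInv p n x := by
  unfold lamInv
  rw [Finset.prod_range_succ']
  simp [Function.iterate_succ_apply, shiftT_consS, mul_comm]

lemma hPow_pos {k : ℕ} {H : ShiftSpace k → ℝ} (hH : ∀ x, 0 < H x) (β : ℝ) (n : ℕ)
    (x : ShiftSpace k) : 0 < hPow H β n x :=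
  Finset.prod_pos fun _ _ => Real.rpow_pos_of_pos (hH _) _

lemma lamInv_pos {k : ℕ} {p : ShiftSpace k → ℝ} (hp : ∀ x, 0 < p x) (n : ℕ)
    (x : ShiftSpace k) : 0 < lamInv p n x :=
  Finset.prod_pos fun _ _ => hp _

lemma lambdaN_pos {k : ℕ} {p H : ShiftSpace k → ℝ} (hp : ∀ x, 0 < p x)
    (hH : ∀ x, 0 < H x) (β : ℝ) (n : ℕ) (x : ShiftSpace k) :
    0 < lambdaN p H β n x :=
  mul_pos (hPow_pos hH _ _ _) (inv_pos.2 (lamInv_pos hp _ _))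

lemma lambdaN_succ_cons {k : ℕ} (p H : ShiftSpace k → ℝ) (β : ℝ) (n : ℕ) (i : Fin k)
    (x : ShiftSpace k) :
    lambdaN p H β (n + 1) (consS i x)
      = H (consS i x) ^ (-β) * (p (consS i x))⁻¹ * lambdaN p H β n x := by
  unfold lambdaN
  rw [hPow_succ_cons, lamInv_succ_cons, mul_inv]
  ring

lemma continuous_ruelleH {k : ℕ} {H : ShiftSpace k → ℝ} (hH_cont : Continuous H)
    (hH_pos : ∀ x, 0 < H x) (β : ℝ) {f : ShiftSpace k → ℝ} (hf : Continuous f) :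
    Continuous (ruelleH H β f) := by
  apply continuous_finset_sum
  intro i _
  exact ((hH_cont.comp (continuous_consS i)).rpow_const
    (fun x => Or.inl (hH_pos _).ne')).mul (hf.comp (continuous_consS i))

lemma continuous_ruelleH_iter {k : ℕ} {H : ShiftSpace k → ℝ} (hH_cont : Continuous H)
    (hH_pos : ∀ x, 0 < H x) (β : ℝ) {f : ShiftSpace k → ℝ} (hf : Continuous f) (n : ℕ) :
    Continuous ((ruelleH H β)^[n] f) := by
  induction n with
  | zero => exact hf
  | succ m ih =>
    rw [Function.iterate_succ_apply']
    exact continuous_ruelleH hH_cont hH_pos β ih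

lemma continuous_lambdaN {k : ℕ} {p H : ShiftSpace k → ℝ} (hp_cont : Continuous p)
    (hp_pos : ∀ x, 0 < p x) (hH_cont : Continuous H) (hH_pos : ∀ x, 0 < H x)
    (β : ℝ) (n : ℕ) : Continuous (lambdaN p H β n) := by
  have h1 : Continuous (hPow H (-β) n) := by
    apply continuous_finset_prod
    intro i _
    exact (hH_cont.comp (continuous_shiftT.iterate i)).rpow_const
      (fun x => Or.inl (hH_pos _).ne')
  have h2 : Continuous (lamInv p n) := by
    apply continuous_finset_prod
    intro i _
    exact hp_cont.comp (continuous_shiftT.iterate i)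
  exact h1.mul (h2.inv₀ fun x => (lamInv_pos hp_pos n x).ne')

/-- Key identity: `ℒ_p^n (Λ_n f) = ℒ_β^n f`. -/
lemma key1 {k : ℕ} (p H : ShiftSpace k → ℝ) (hp_pos : ∀ x, 0 < p x) (β : ℝ)
    (n : ℕ) (f : ShiftSpace k → ℝ) :
    (ruelleOpR p)^[n] (fun z => lambdaN p H β n z * f z) = (ruelleH H β)^[n] f := by
  induction n generalizing f with
  | zero => simp [lambdaN, hPow, lamInv]
  | succ m ih =>
    rw [Function.iterate_succ_apply, Function.iterate_succ_apply]
    have step : ruelleOpR p (fun z => lambdaN p H β (m + 1) z * f z)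
        = fun x => lambdaN p H β m x * ruelleH H β f x := by
      funext x
      unfold ruelleOpR ruelleH
      rw [Finset.mul_sum]
      apply Finset.sum_congr rfl
      intro i _
      simp only []
      rw [lambdaN_succ_cons]
      have := (hp_pos (consS i x)).ne'
      field_simp
    rw [step, ih (ruelleH H β f)]

/-- Key identity 2: `ℒ_β^n (Λ_n⁻¹ · u ∘ T^n) = u`, using normalization of `p`. -/
lemma key2 {k : ℕ} (p H : ShiftSpace k → ℝ) (hp_pos : ∀ x, 0 < p x)
    (hp_norm : ∀ x : ShiftSpace k, ∑ i : Fin k, p (consS i x) = 1)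
    (hH_pos : ∀ x, 0 < H x) (β : ℝ)
    (n : ℕ) (u : ShiftSpace k → ℝ) :
    (ruelleH H β)^[n] (fun x => (lambdaN p H β n x)⁻¹ * u (shiftT^[n] x)) = u := by
  induction n generalizing u with
  | zero => simp [lambdaN, hPow, lamInv]
  | succ m ih =>
    rw [Function.iterate_succ_apply]
    have step : ruelleH H β (fun x => (lambdaN p H β (m + 1) x)⁻¹ * u (shiftT^[m + 1] x))
        = fun x => (lambdaN p H β m x)⁻¹ * u (shiftT^[m] x) := by
      funext x
      unfold ruelleH
      have : ∀ i : Fin k,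
          H (consS i x) ^ (-β) * ((lambdaN p H β (m + 1) (consS i x))⁻¹
            * u (shiftT^[m + 1] (consS i x)))
          = p (consS i x) * ((lambdaN p H β m x)⁻¹ * u (shiftT^[m] x)) := by
        intro i
        rw [Function.iterate_succ_apply, shiftT_consS, lambdaN_succ_cons]
        have hH := (Real.rpow_pos_of_pos (hH_pos (consS i x)) (-β)).ne'
        have hp := (hp_pos (consS i x)).ne'
        have hl := (lambdaN_pos hp_pos hH_pos β m x).ne'
        field_simp
      rw [Finset.sum_congr rfl fun i _ => this i, ← Finset.sum_mul, hp_norm, one_mul]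
    rw [step, ih u]

/-- Spectral property iterated. -/
lemma spectral {k : ℕ} [NeZero k] {H : ShiftSpace k → ℝ} (hH_cont : Continuous H)
    (hH_pos : ∀ x, 0 < H x) (β lamβ : ℝ)
    (ν : Measure (ShiftSpace k))
    (hν : ∀ f : ShiftSpace k → ℝ, Continuous f →
      ∫ x, ruelleH H β f x ∂ν = lamβ * ∫ x, f x ∂ν)
    (g : ShiftSpace k → ℝ) (hg : Continuous g) (n : ℕ) :
    ∫ x, (ruelleH H β)^[n] g x ∂ν = lamβ ^ n * ∫ x, g x ∂ν := by
  induction n generalizing g with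
  | zero => simp
  | succ m ih =>
    rw [Function.iterate_succ_apply]
    rw [ih (ruelleH H β g) (continuous_ruelleH hH_cont hH_pos β hg), hν g hg,
      pow_succ]
    ring

theorem eigenmeasure_conditional_identity' {k : ℕ} [NeZero k]
    (p : ShiftSpace k → ℝ) (hp_cont : Continuous p) (hp_pos : ∀ x, 0 < p x)
    (hp_norm : ∀ x : ShiftSpace k, ∑ i : Fin k, p (consS i x) = 1)
    (H : ShiftSpace k → ℝ) (hH_cont : Continuous H) (hH_pos : ∀ x, 0 < H x)
    (β lamβ : ℝ) (hlam : 0 < lamβ)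
    (ν : Measure (ShiftSpace k)) [IsProbabilityMeasure ν]
    (hν : ∀ f : ShiftSpace k → ℝ, Continuous f →
      ∫ x, ruelleH H β f x ∂ν = lamβ * ∫ x, f x ∂ν) :
    ∀ f : ShiftSpace k → ℝ, Continuous f → ∀ n : ℕ,
      ∫ x, f x ∂ν =
        ∫ x, (lambdaN p H β n x)⁻¹ *
          (ruelleOpR p)^[n] (fun z => lambdaN p H β n z * f z) (shiftT^[n] x) ∂ν := by
  intro f hf n
  set u := (ruelleH H β)^[n] f with hu_def
  have hu : Continuous u := continuous_ruelleH_iter hH_cont hH_pos β hf n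
  have hΛinv : Continuous fun x => (lambdaN p H β n x)⁻¹ :=
    (continuous_lambdaN hp_cont hp_pos hH_cont hH_pos β n).inv₀
      fun x => (lambdaN_pos hp_pos hH_pos β n x).ne'
  have hg : Continuous fun x => (lambdaN p H β n x)⁻¹ * u (shiftT^[n] x) :=
    hΛinv.mul (hu.comp (continuous_shiftT.iterate n))
  have hrw : (fun x => (lambdaN p H β n x)⁻¹ *
        (ruelleOpR p)^[n] (fun z => lambdaN p H β n z * f z) (shiftT^[n] x))
      = fun x => (lambdaN p H β n x)⁻¹ * u (shiftT^[n] x) := by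
    rw [key1 p H hp_pos β n f]
  have h1 := spectral hH_cont hH_pos β lamβ ν hν _ hg n
  rw [key2 p H hp_pos hp_norm hH_pos β n u] at h1
  have h2 := spectral hH_cont hH_pos β lamβ ν hν f hf n
  rw [← hu_def] at h2
  have hpow : (lamβ ^ n : ℝ) ≠ 0 := (pow_pos hlam n).ne'
  have : lamβ ^ n * ∫ x, f x ∂ν
      = lamβ ^ n * ∫ x, (lambdaN p H β n x)⁻¹ * u (shiftT^[n] x) ∂ν := by
    rw [← h2, h1]
  have := mul_left_cancel₀ hpow this
  rw [this]
  congr 1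
  exact hrw.symm


theorem eigenmeasure_conditional_identity {k : ℕ} [NeZero k]
    (p : ShiftSpace k → ℝ) (hp_cont : Continuous p) (hp_pos : ∀ x, 0 < p x)
    (hp_norm : ∀ x : ShiftSpace k, ∑ i : Fin k, p (consS i x) = 1)
    (hp_hold : HolderSeq fun x => Real.log (p x))
    (μ : Measure (ShiftSpace k)) [IsProbabilityMeasure μ]
    (hμ : ∀ f : ShiftSpace k → ℝ, Continuous f →
      ∫ x, ruelleOpR p f x ∂μ = ∫ x, f x ∂μ)
    (H : ShiftSpace k → ℝ) (hH_cont : Continuous H) (hH_pos : ∀ x, 0 < H x)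
    (hH_hold : HolderSeq fun x => Real.log (H x))
    (β lamβ : ℝ) (hlam : 0 < lamβ)
    (ν : Measure (ShiftSpace k)) [IsProbabilityMeasure ν]
    (hν : ∀ f : ShiftSpace k → ℝ, Continuous f →
      ∫ x, ruelleH H β f x ∂ν = lamβ * ∫ x, f x ∂ν) :
    ∀ f : ShiftSpace k → ℝ, Continuous f → ∀ n : ℕ,
      ∫ x, f x ∂ν =
        ∫ x, (lambdaN p H β n x)⁻¹ *
          (ruelleOpR p)^[n] (fun z => lambdaN p H β n z * f z) (shiftT^[n] x) ∂ν := by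
  exact eigenmeasure_conditional_identity' p hp_cont hp_pos hp_norm H hH_cont hH_pos β lamβ hlam ν hν
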